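/- Let G be a complete edge-colored graph such that for every strong module M of G with |M| ≥ 2 the quotient graph G[M]/P_max(M) is a complete edge-colored permutation graph. Then G is a complete edge-colored permutation graph. -/

import Mathlib

/-- The edge relation `E` on `V` together with the labeling `ℓ : V ≃ Fin n`
is the simple permutation graph of the permutation `π` of `{1,…,n}`:
`{u,v} ∈ E ⇔ ℓ(u) > ℓ(v) and π⁻¹(ℓ(u)) < π⁻¹(ℓ(v))` (stated symmetrically in `u,v`). -/
def IsPermGraph {V : Type*} {n : ℕ} (E : V → V → Prop) (ℓ : V ≃ Fin n)
    (π : Equiv.Perm (Fin n)) : Prop :=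
  ∀ u v : V, E u v ↔
    ((ℓ v < ℓ u ∧ π⁻¹ (ℓ u) < π⁻¹ (ℓ v)) ∨ (ℓ u < ℓ v ∧ π⁻¹ (ℓ v) < π⁻¹ (ℓ u)))

/-- `c` is the edge-coloring of a complete `k`-edge-colored graph on `V`:
it is symmetric, every pair of distinct vertices receives a color in `{1,…,k}`,
and every color in `{1,…,k}` occurs on some edge. -/
def IsCompleteColoring {V : Type*} (k : ℕ) (c : V → V → ℕ) : Prop :=
  (∀ u v : V, c u v = c v u) ∧
  (∀ u v : V, u ≠ v → c u v ∈ Finset.Icc 1 k) ∧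
  (∀ i ∈ Finset.Icc 1 k, ∃ u v : V, u ≠ v ∧ c u v = i)

/-- The edge relation of the `i`-th monochromatic subgraph `G_{|i}`. -/
def monoEdge {V : Type*} (c : V → V → ℕ) (i : ℕ) : V → V → Prop :=
  fun u v => u ≠ v ∧ c u v = i

/-- The complete edge-colored graph with coloring `c` is a complete edge-colored
permutation graph: there are a labeling `ℓ` and permutations `π i` such that every
monochromatic subgraph `(G_{|i}, ℓ)` is the simple permutation graph of `π i`. -/
def IsCECPG {V : Type*} [Fintype V] (c : V → V → ℕ) : Prop :=
  ∃ (ℓ : V ≃ Fin (Fintype.card V)) (π : ℕ → Equiv.Perm (Fin (Fintype.card V))),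
    ∀ i : ℕ, IsPermGraph (monoEdge c i) ℓ (π i)

/-- `c` contains a rainbow triangle: three vertices whose three connecting edges
have pairwise distinct colors. -/
def HasRainbowTriangle {V : Type*} (c : V → V → ℕ) : Prop :=
  ∃ u v w : V, u ≠ v ∧ u ≠ w ∧ v ≠ w ∧
    c u v ≠ c u w ∧ c u v ≠ c v w ∧ c u w ≠ c v w

/-- `M` is a module of the complete edge-colored graph with coloring `c`. -/
def IsModule {V : Type*} (c : V → V → ℕ) (M : Set V) : Prop :=
  ∀ u ∈ M, ∀ w ∈ M, ∀ v ∉ M, c u v = c w v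

/-- `M` is a strong module: a module that overlaps no other module. -/
def IsStrongModule {V : Type*} (c : V → V → ℕ) (M : Set V) : Prop :=
  IsModule c M ∧ ∀ M' : Set V, IsModule c M' → M ⊆ M' ∨ M' ⊆ M ∨ M ∩ M' = ∅

/-- `N` is a member of `P_max(M)`: a non-empty strong module that is a proper subset
of `M` and is inclusion-maximal among strong modules properly contained in `M`. -/
def PmaxPart {V : Type*} (c : V → V → ℕ) (M N : Set V) : Prop :=
  N.Nonempty ∧ IsStrongModule c N ∧ N ⊂ M ∧
    ∀ N' : Set V, IsStrongModule c N' → N' ⊂ M → N ⊆ N' → N' = N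

/-- The edge relation of the `i`-th monochromatic subgraph of the quotient graph
`G[M]/P_max(M)`: two distinct parts are adjacent with color `i` iff some (equivalently,
by the module property, every) edge between them has color `i`. -/
def quotientMonoEdge {V : Type*} (c : V → V → ℕ) (M : Set V) (i : ℕ) :
    {N : Set V // PmaxPart c M N} → {N : Set V // PmaxPart c M N} → Prop :=
  fun N₁ N₂ => N₁ ≠ N₂ ∧ ∃ u ∈ N₁.1, ∃ v ∈ N₂.1, c u v = i

/-- The quotient graph `G[M]/P_max(M)` is a complete edge-colored permutation graph. -/
def QuotientIsCECPG {V : Type*} (c : V → V → ℕ) (M : Set V) : Prop :=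
  ∃ (m : ℕ) (ℓ : {N : Set V // PmaxPart c M N} ≃ Fin m)
    (π : ℕ → Equiv.Perm (Fin m)),
    ∀ i : ℕ, IsPermGraph (quotientMonoEdge c M i) ℓ (π i)

/-- The strong module `M` (with `|M| ≥ 2`) is series: its quotient graph has at least
two vertices and all its edges carry the same color. -/
def IsSeriesModule {V : Type*} (c : V → V → ℕ) (M : Set V) : Prop :=
  (∃ N₁ N₂ : Set V, PmaxPart c M N₁ ∧ PmaxPart c M N₂ ∧ N₁ ≠ N₂) ∧
  (∀ N₁ N₂ N₁' N₂' : Set V, PmaxPart c M N₁ → PmaxPart c M N₂ →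
    PmaxPart c M N₁' → PmaxPart c M N₂' → N₁ ≠ N₂ → N₁' ≠ N₂' →
    ∀ u v u' v' : V, u ∈ N₁ → v ∈ N₂ → u' ∈ N₁' → v' ∈ N₂' → c u v = c u' v')

/-- The color `i` appears on some edge of the quotient graph `G[M]/P_max(M)`. -/
def QuotientColorAppears {V : Type*} (c : V → V → ℕ) (M : Set V) (i : ℕ) : Prop :=
  ∃ N₁ N₂ : Set V, PmaxPart c M N₁ ∧ PmaxPart c M N₂ ∧ N₁ ≠ N₂ ∧
    ∃ u ∈ N₁, ∃ v ∈ N₂, c u v = i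



section Glue
variable {m : ℕ}

def offsetSum (s : Fin m → ℕ) (t : Fin m) : ℕ :=
  ∑ t' ∈ Finset.univ.filter (fun t' => t' < t), s t'

lemma offsetSum_add_lt {s : Fin m → ℕ} {t t' : Fin m} (h : t < t') {j : ℕ} (hj : j < s t) :
    offsetSum s t + j < offsetSum s t' := by
  have ht : t ∉ Finset.univ.filter (fun x => x < t) := by simp
  have hsub : insert t (Finset.univ.filter (fun x => x < t)) ⊆
      Finset.univ.filter (fun x => x < t') := by
    intro x hx
    simp only [Finset.mem_insert, Finset.mem_filter, Finset.mem_univ, true_and] at *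
    rcases hx with rfl | hx
    · exact h
    · exact hx.trans h
  calc offsetSum s t + j < s t + offsetSum s t := by omega
    _ = ∑ x ∈ insert t (Finset.univ.filter (fun x => x < t)), s x := (Finset.sum_insert ht).symm
    _ ≤ _ := Finset.sum_le_sum_of_subset hsub

lemma offsetSum_add_lt_total {s : Fin m → ℕ} {t : Fin m} {j : ℕ} (hj : j < s t) :
    offsetSum s t + j < ∑ t', s t' := by
  have ht : t ∉ Finset.univ.filter (fun x => x < t) := by simp
  calc offsetSum s t + j < s t + offsetSum s t := by omega
    _ = ∑ x ∈ insert t (Finset.univ.filter (fun x => x < t)), s x := (Finset.sum_insert ht).symm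
    _ ≤ _ := Finset.sum_le_sum_of_subset (Finset.subset_univ _)

lemma blockLt_iff {s : Fin m → ℕ} {t t' : Fin m} {j j' : ℕ} (hj : j < s t) (hj' : j' < s t') :
    offsetSum s t + j < offsetSum s t' + j' ↔ t < t' ∨ (t = t' ∧ j < j') := by
  rcases lt_trichotomy t t' with h | h | h
  · have := (offsetSum_add_lt h hj).trans_le (Nat.le_add_right _ j')
    simp [h, this]
  · subst h
    simp only [lt_irrefl, false_or, true_and]
    omega
  · have := (offsetSum_add_lt h hj').trans_le (Nat.le_add_right _ j)
    have h1 : ¬ t < t' := not_lt_of_gt h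
    have h2 : t ≠ t' := ne_of_gt h
    simp [h1, h2]
    omega

variable {V : Type*} [Fintype V]

noncomputable def glueEquiv (b : V → Fin m) (inn : V → ℕ) (s : Fin m → ℕ)
    (hlt : ∀ v, inn v < s (b v)) (hsum : ∑ t, s t = Fintype.card V)
    (hinj : ∀ u v, b u = b v → inn u = inn v → u = v) : V ≃ Fin (Fintype.card V) :=
  Equiv.ofBijective (fun v => ⟨offsetSum s (b v) + inn v, hsum ▸ offsetSum_add_lt_total (hlt v)⟩)
    ((Fintype.bijective_iff_injective_and_card _).mpr ⟨by
      intro u v huv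
      have hv : offsetSum s (b u) + inn u = offsetSum s (b v) + inn v :=
        congrArg Fin.val huv
      rcases lt_trichotomy (b u) (b v) with h | h | h
      · exact absurd hv (Nat.ne_of_lt ((offsetSum_add_lt h (hlt u)).trans_le (Nat.le_add_right _ _)))
      · refine hinj u v h ?_
        rw [h] at hv; omega
      · exact absurd hv.symm (Nat.ne_of_lt ((offsetSum_add_lt h (hlt v)).trans_le (Nat.le_add_right _ _))), by simp⟩)

lemma glueEquiv_lt_iff (b : V → Fin m) (inn : V → ℕ) (s : Fin m → ℕ)
    (hlt : ∀ v, inn v < s (b v)) (hsum : ∑ t, s t = Fintype.card V)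
    (hinj : ∀ u v, b u = b v → inn u = inn v → u = v) (u v : V) :
    glueEquiv b inn s hlt hsum hinj u < glueEquiv b inn s hlt hsum hinj v ↔
      b u < b v ∨ (b u = b v ∧ inn u < inn v) := by
  have : glueEquiv b inn s hlt hsum hinj u < glueEquiv b inn s hlt hsum hinj v ↔
      offsetSum s (b u) + inn u < offsetSum s (b v) + inn v := by
    simp [glueEquiv, Fin.lt_def]
  rw [this]
  exact blockLt_iff (hlt u) (hlt v)

end Glue

section Restrict

variable {V : Type*} {c : V → V → ℕ} {N : Set V}

/-- restriction of the coloring to a subset -/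
def restrictC (c : V → V → ℕ) (N : Set V) : ↑N → ↑N → ℕ := fun u v => c u v

lemma module_preimage {S : Set V} (hS : IsModule c S) :
    IsModule (restrictC c N) (Subtype.val ⁻¹' S) := by
  intro u hu w hw v hv
  exact hS u hu w hw v hv

lemma module_image (hN : IsModule c N) {T : Set ↑N} (hT : IsModule (restrictC c N) T) :
    IsModule c (Subtype.val '' T) := by
  rintro u ⟨u', hu', rfl⟩ w ⟨w', hw', rfl⟩ v hv
  by_cases hvN : v ∈ N
  · refine hT u' hu' w' hw' ⟨v, hvN⟩ ?_
    intro h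
    exact hv ⟨⟨v, hvN⟩, h, rfl⟩
  · exact hN u' u'.2 w' w'.2 v hvN

lemma image_val_subset {T : Set ↑N} : Subtype.val '' T ⊆ N := by
  rintro x ⟨x', _, rfl⟩; exact x'.2

lemma image_preimage_val {S : Set V} (h : S ⊆ N) :
    (Subtype.val : ↑N → V) '' (Subtype.val ⁻¹' S) = S :=
  Set.image_preimage_eq_of_subset (by rw [Subtype.range_val]; exact h)

lemma strong_preimage (hN : IsModule c N) {S : Set V} (hS : IsStrongModule c S) :
    IsStrongModule (restrictC c N) (Subtype.val ⁻¹' S) := by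
  refine ⟨module_preimage hS.1, fun M' hM' => ?_⟩
  have hM'c : IsModule c (Subtype.val '' M') := module_image hN hM'
  rcases hS.2 _ hM'c with h | h | h
  · left
    intro x hx
    have : (x : V) ∈ Subtype.val '' M' := h hx
    rcases this with ⟨y, hy, hxy⟩
    rwa [← Subtype.val_injective hxy]
  · right; left
    intro x hx
    exact h ⟨x, hx, rfl⟩
  · right; right
    ext x
    simp only [Set.mem_inter_iff, Set.mem_preimage, Set.mem_empty_iff_false, iff_false, not_and]
    intro hxS hxM'
    have : (x : V) ∈ S ∩ Subtype.val '' M' := ⟨hxS, ⟨x, hxM', rfl⟩⟩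
    rw [h] at this
    exact this

lemma strong_image (hN : IsStrongModule c N) {T : Set ↑N}
    (hT : IsStrongModule (restrictC c N) T) : IsStrongModule c (Subtype.val '' T) := by
  refine ⟨module_image hN.1 hT.1, fun M' hM' => ?_⟩
  rcases hN.2 M' hM' with h | h | h
  · exact Or.inl (image_val_subset.trans h)
  · have hM'r : IsModule (restrictC c N) (Subtype.val ⁻¹' M') := module_preimage hM'
    rcases hT.2 _ hM'r with h2 | h2 | h2
    · left
      rintro x ⟨x', hx', rfl⟩
      exact h2 hx'
    · right; left
      intro x hx
      exact ⟨⟨x, h hx⟩, h2 hx, rfl⟩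
    · right; right
      ext x
      simp only [Set.mem_inter_iff, Set.mem_empty_iff_false, iff_false, not_and]
      rintro ⟨x', hx', rfl⟩ hxM'
      have : x' ∈ T ∩ (Subtype.val ⁻¹' M') := ⟨hx', hxM'⟩
      rw [h2] at this
      exact this
  · right; right
    ext x
    simp only [Set.mem_inter_iff, Set.mem_empty_iff_false, iff_false, not_and]
    intro hxT hxM'
    have : x ∈ N ∩ M' := ⟨image_val_subset hxT, hxM'⟩
    rw [h] at this
    exact this

lemma image_val_ssubset {T T' : Set ↑N} : Subtype.val '' T ⊂ Subtype.val '' T' ↔ T ⊂ T' := by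
  constructor
  · intro h
    constructor
    · exact (Set.image_subset_image_iff Subtype.val_injective).mp h.1
    · intro hsub
      exact h.2 (Set.image_mono hsub)
  · intro h
    constructor
    · exact Set.image_mono h.1
    · intro hsub
      exact h.2 ((Set.image_subset_image_iff Subtype.val_injective).mp hsub)

lemma pmax_image (hN : IsStrongModule c N) (M' T : Set ↑N) :
    PmaxPart (restrictC c N) M' T ↔ PmaxPart c (Subtype.val '' M') (Subtype.val '' T) := by
  constructor
  · rintro ⟨hne, hstr, hss, hmax⟩
    refine ⟨hne.image _, strong_image hN hstr, image_val_ssubset.mpr hss, ?_⟩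
    intro S' hS' hS'ss hTS'
    have hS'N : S' ⊆ N := hS'ss.1.trans image_val_subset
    have hpre : Subtype.val '' (Subtype.val ⁻¹' S') = S' := image_preimage_val hS'N
    have h1 : IsStrongModule (restrictC c N) (Subtype.val ⁻¹' S') := strong_preimage hN.1 hS'
    have h2 : Subtype.val ⁻¹' S' ⊂ M' := by
      rw [← image_val_ssubset, hpre]; exact hS'ss
    have h3 : T ⊆ Subtype.val ⁻¹' S' := by
      intro x hx
      exact hTS' ⟨x, hx, rfl⟩
    have := hmax _ h1 h2 h3
    rw [← hpre, this]
  · rintro ⟨hne, hstr, hss, hmax⟩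
    have hTT : Subtype.val ⁻¹' (Subtype.val '' T) = T := Set.preimage_image_eq _ Subtype.val_injective
    refine ⟨?_, ?_, image_val_ssubset.mp hss, ?_⟩
    · rcases hne with ⟨x, x', hx', hxx⟩
      exact ⟨x', hx'⟩
    · have := strong_preimage hN.1 hstr
      rwa [hTT] at this
    · intro T' hT' hT'ss hTT'
      have := hmax _ (strong_image hN hT') (image_val_ssubset.mpr hT'ss)
        (Set.image_mono hTT')
      exact Set.image_injective.mpr Subtype.val_injective this

lemma quotient_transfer (hN : IsStrongModule c N) (M' : Set ↑N)
    (h : QuotientIsCECPG c (Subtype.val '' M')) : QuotientIsCECPG (restrictC c N) M' := by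
  obtain ⟨m, ℓ, π, hp⟩ := h
  have hinvmem : ∀ S : {S : Set V // PmaxPart c (Subtype.val '' M') S},
      PmaxPart (restrictC c N) M' (Subtype.val ⁻¹' S.1) := by
    intro S
    have hS'N : S.1 ⊆ N := S.2.2.2.1.1.trans image_val_subset
    have hpre : Subtype.val '' (Subtype.val ⁻¹' S.1) = S.1 := image_preimage_val hS'N
    rw [pmax_image hN, hpre]
    exact S.2
  refine ⟨m, Equiv.trans ⟨fun T => ⟨Subtype.val '' T.1, (pmax_image hN M' T.1).mp T.2⟩,
    fun S => ⟨Subtype.val ⁻¹' S.1, hinvmem S⟩, ?_, ?_⟩ ℓ, π, ?_⟩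
  · intro T
    exact Subtype.ext (Set.preimage_image_eq _ Subtype.val_injective)
  · intro S
    have hS'N : S.1 ⊆ N := S.2.2.2.1.1.trans image_val_subset
    exact Subtype.ext (image_preimage_val hS'N)
  · intro i T₁ T₂
    have key : quotientMonoEdge (restrictC c N) M' i T₁ T₂ ↔
        quotientMonoEdge c (Subtype.val '' M') i
          ⟨Subtype.val '' T₁.1, (pmax_image hN M' T₁.1).mp T₁.2⟩
          ⟨Subtype.val '' T₂.1, (pmax_image hN M' T₂.1).mp T₂.2⟩ := by
      unfold quotientMonoEdge
      constructor
      · rintro ⟨hne, u, hu, v, hv, hc⟩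
        refine ⟨?_, ⟨u, ⟨u, hu, rfl⟩, v, ⟨v, hv, rfl⟩, hc⟩⟩
        intro hcon
        apply hne
        have := congrArg Subtype.val hcon
        simp only at this
        exact Subtype.ext (Set.image_injective.mpr Subtype.val_injective this)
      · rintro ⟨hne, u, ⟨u', hu', rfl⟩, v, ⟨v', hv', rfl⟩, hc⟩
        refine ⟨?_, ⟨u', hu', v', hv', hc⟩⟩
        intro hcon
        apply hne
        exact Subtype.ext (congrArg (Set.image Subtype.val) (congrArg Subtype.val hcon))
    rw [key]
    exact hp i _ _

end Restrict

section MainProof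

lemma univ_strong {V : Type*} (c : V → V → ℕ) : IsStrongModule c (Set.univ : Set V) :=
  ⟨fun u _ w _ v hv => absurd (Set.mem_univ v) hv,
   fun M' _ => Or.inr (Or.inl (Set.subset_univ _))⟩

lemma singleton_strong {V : Type*} (c : V → V → ℕ) (v : V) : IsStrongModule c {v} := by
  constructor
  · intro u hu w hw x _
    simp only [Set.mem_singleton_iff] at hu hw
    rw [hu, hw]
  · intro M' _
    by_cases hv : v ∈ M'
    · exact Or.inl (Set.singleton_subset_iff.mpr hv)
    · right; right
      ext x
      simp only [Set.mem_inter_iff, Set.mem_singleton_iff, Set.mem_empty_iff_false, iff_false,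
        not_and]
      rintro rfl
      exact hv

theorem auxMain (n : ℕ) : ∀ (V : Type u) [Fintype V] [Nonempty V] (c : V → V → ℕ),
    (∀ u v : V, c u v = c v u) →
    (∀ M : Set V, IsStrongModule c M → 2 ≤ M.ncard → QuotientIsCECPG c M) →
    Fintype.card V = n → IsCECPG c := by
  induction n using Nat.strong_induction_on with
  | _ n IH =>
  intro V _ _ c hsym hq hcard
  classical
  by_cases hn1 : Fintype.card V ≤ 1
  · haveI : Subsingleton V := Fintype.card_le_one_iff_subsingleton.mp hn1
    refine ⟨Fintype.equivFin V, fun _ => 1, ?_⟩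
    intro i u v
    constructor
    · rintro ⟨hne, -⟩
      exact absurd (Subsingleton.elim u v) hne
    · rintro (⟨h, -⟩ | ⟨h, -⟩) <;>
      · rw [Subsingleton.elim u v] at h
        exact absurd h (lt_irrefl _)
  push_neg at hn1
  have huniv : IsStrongModule c Set.univ := univ_strong c
  have hncuniv : (Set.univ : Set V).ncard = Fintype.card V := by
    rw [Set.ncard_univ, Nat.card_eq_fintype_card]
  obtain ⟨m, ℓQ, πQ, hQ⟩ := hq Set.univ huniv (by omega)
  -- every vertex lies in a maximal strong proper module
  have hex : ∀ v : V, ∃ S : Set V, PmaxPart c Set.univ S ∧ v ∈ S := by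
    intro v
    set Pr : ℕ → Prop := fun j =>
      ∃ S : Set V, (IsStrongModule c S ∧ S ⊂ Set.univ ∧ v ∈ S) ∧ S.ncard = j with hPr
    have hproper : ({v} : Set V) ⊂ Set.univ := by
      obtain ⟨w, hw⟩ := Fintype.exists_ne_of_one_lt_card hn1 v
      refine ⟨Set.subset_univ _, fun hsub => ?_⟩
      have : w ∈ ({v} : Set V) := hsub (Set.mem_univ w)
      exact hw this
    have h1 : Pr 1 := ⟨{v}, ⟨singleton_strong c v, hproper, rfl⟩, Set.ncard_singleton v⟩
    have h1n : 1 ≤ n := by omega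
    have hspec := Nat.findGreatest_spec h1n h1
    obtain ⟨S, ⟨hstr, hss, hv⟩, hncard⟩ := hspec
    refine ⟨S, ⟨⟨v, hv⟩, hstr, hss, ?_⟩, hv⟩
    intro S' hS' hS'ss hSS'
    have hv' : v ∈ S' := hSS' hv
    have hle : S'.ncard ≤ n := by
      have := Set.ncard_le_ncard (Set.subset_univ S') (Set.toFinite _)
      omega
    have hfg : S'.ncard ≤ Nat.findGreatest Pr n :=
      Nat.le_findGreatest hle ⟨S', ⟨hS', hS'ss, hv'⟩, rfl⟩
    exact (Set.eq_of_subset_of_ncard_le hSS' (by omega) (Set.toFinite _)).symm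
  have huniq : ∀ S₁ S₂ : Set V, PmaxPart c Set.univ S₁ → PmaxPart c Set.univ S₂ →
      ∀ v : V, v ∈ S₁ → v ∈ S₂ → S₁ = S₂ := by
    intro S₁ S₂ h₁ h₂ v hv₁ hv₂
    rcases h₁.2.1.2 S₂ h₂.2.1.1 with h | h | h
    · exact (h₁.2.2.2 S₂ h₂.2.1 h₂.2.2.1 h).symm
    · exact (h₂.2.2.2 S₁ h₁.2.1 h₁.2.2.1 h)
    · exfalso
      have : v ∈ S₁ ∩ S₂ := ⟨hv₁, hv₂⟩
      rw [h] at this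
      exact this
  -- the part map
  let part : V → {N : Set V // PmaxPart c Set.univ N} := fun v => ⟨(hex v).choose, (hex v).choose_spec.1⟩
  have hpartmem : ∀ v : V, v ∈ (part v).1 := fun v => (hex v).choose_spec.2
  have hparteq : ∀ (v : V) (A : {N : Set V // PmaxPart c Set.univ N}), v ∈ A.1 → part v = A :=
    fun v A h => Subtype.ext (huniq _ _ (part v).2 A.2 v (hpartmem v) h)
  -- recursive data on each part
  have hpcecpg : ∀ A : {N : Set V // PmaxPart c Set.univ N},
      ∃ (nA : ℕ) (eA : ↑A.1 ≃ Fin nA) (πA : ℕ → Equiv.Perm (Fin nA)),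
        ∀ i, IsPermGraph (monoEdge (restrictC c A.1) i) eA (πA i) := by
    intro A
    haveI : Nonempty ↑A.1 := A.2.1.to_subtype
    have h2 : A.1.ncard = Fintype.card ↑A.1 := by
      rw [← Nat.card_coe_set_eq, Nat.card_eq_fintype_card]
    have hlt : Fintype.card ↑A.1 < n := by
      have h1 : A.1.ncard < (Set.univ : Set V).ncard :=
        Set.ncard_lt_ncard A.2.2.2.1 (Set.toFinite _)
      omega
    have hsym' : ∀ u v : ↑A.1, restrictC c A.1 u v = restrictC c A.1 v u :=
      fun u v => hsym u v
    have hq' : ∀ M' : Set ↑A.1, IsStrongModule (restrictC c A.1) M' → 2 ≤ M'.ncard →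
        QuotientIsCECPG (restrictC c A.1) M' := by
      intro M' hM' hM'2
      refine quotient_transfer A.2.2.1 M' (hq _ (strong_image A.2.2.1 hM') ?_)
      rw [Set.ncard_image_of_injective _ Subtype.val_injective]
      exact hM'2
    obtain ⟨e, π, h⟩ := IH (Fintype.card ↑A.1) hlt ↑A.1 (restrictC c A.1) hsym' hq' rfl
    exact ⟨_, e, π, h⟩
  choose nA eA πA heA using hpcecpg
  haveI : Fintype {N : Set V // PmaxPart c Set.univ N} := Fintype.ofEquiv _ ℓQ.symm
  -- the sum of part sizes is the total size
  have hsum : ∀ f : {N : Set V // PmaxPart c Set.univ N} ≃ Fin m,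
      ∑ t : Fin m, nA (f.symm t) = Fintype.card V := by
    intro f
    rw [Equiv.sum_comp f.symm (fun A => nA A)]
    have h1 : ∀ A : {N : Set V // PmaxPart c Set.univ N},
        nA A = Fintype.card {x : V // part x = A} := by
      intro A
      have e2 : {x : V // part x = A} ≃ ↑A.1 :=
        Equiv.subtypeEquivRight (fun x => ⟨fun h => h ▸ hpartmem x, fun h => hparteq x A h⟩)
      calc nA A = Fintype.card (Fin (nA A)) := (Fintype.card_fin _).symm
        _ = Fintype.card ↑A.1 := (Fintype.card_congr (eA A)).symm
        _ = Fintype.card {x : V // part x = A} := Fintype.card_congr e2.symm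
    calc ∑ A : {N : Set V // PmaxPart c Set.univ N}, nA A
        = ∑ A : {N : Set V // PmaxPart c Set.univ N}, Fintype.card {x : V // part x = A} :=
          Finset.sum_congr rfl (fun A _ => h1 A)
      _ = Fintype.card ((A : {N : Set V // PmaxPart c Set.univ N}) × {x : V // part x = A}) :=
          (Fintype.card_sigma).symm
      _ = Fintype.card V := Fintype.card_congr (Equiv.sigmaFiberEquiv part)
  -- the generic glued labeling
  have main : ∀ (f : {N : Set V // PmaxPart c Set.univ N} ≃ Fin m)
      (g : ∀ A : {N : Set V // PmaxPart c Set.univ N}, ↑A.1 ≃ Fin (nA A)),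
      ∃ p : V ≃ Fin (Fintype.card V), ∀ u v : V, p u < p v ↔
        (f (part u) < f (part v) ∨
          (part u = part v ∧
            ((g (part u) ⟨u, hpartmem u⟩ : Fin _) : ℕ) < ((g (part v) ⟨v, hpartmem v⟩ : Fin _) : ℕ))) := by
    intro f g
    have geq : ∀ (w : V) (A : {N : Set V // PmaxPart c Set.univ N}) (hA : part w = A),
        ((g (part w) ⟨w, hpartmem w⟩ : Fin _) : ℕ) = ((g A ⟨w, hA ▸ hpartmem w⟩ : Fin _) : ℕ) := by
      intro w A hA
      subst hA
      rfl
    have hltg : ∀ v : V, ((g (part v) ⟨v, hpartmem v⟩ : Fin _) : ℕ) < nA (f.symm (f (part v))) := by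
      intro v
      rw [f.symm_apply_apply]
      exact (g _ _).isLt
    refine ⟨glueEquiv (fun v => f (part v)) (fun v => ((g (part v) ⟨v, hpartmem v⟩ : Fin _) : ℕ))
      (fun t => nA (f.symm t)) hltg (hsum f) ?_, ?_⟩
    · intro u v hb hi
      have hb' : f (part u) = f (part v) := hb
      have hi' : ((g (part u) ⟨u, hpartmem u⟩ : Fin _) : ℕ) =
          ((g (part v) ⟨v, hpartmem v⟩ : Fin _) : ℕ) := hi
      have h : part u = part v := f.injective hb'
      rw [geq u (part v) h] at hi'
      have h2 : (g (part v)) ⟨u, h ▸ hpartmem u⟩ = (g (part v)) ⟨v, hpartmem v⟩ := Fin.ext hi'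
      have h3 := (g (part v)).injective h2
      exact congrArg Subtype.val h3
    · intro u v
      rw [glueEquiv_lt_iff]
      constructor
      · rintro (h | ⟨hb, hi⟩)
        · exact Or.inl h
        · exact Or.inr ⟨f.injective hb, hi⟩
      · rintro (h | ⟨hb, hi⟩)
        · exact Or.inl h
        · exact Or.inr ⟨congrArg f hb, hi⟩
  obtain ⟨ℓfin, hℓfin⟩ := main ℓQ eA
  choose pfun hpfun using
    (fun i => main (ℓQ.trans ((πQ i)⁻¹ : Equiv.Perm (Fin m)))
      (fun A => (eA A).trans ((πA A i)⁻¹ : Equiv.Perm (Fin (nA A)))))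
  refine ⟨ℓfin, fun i => (pfun i).symm.trans ℓfin, ?_⟩
  intro i u v
  have hπ : ∀ w : V, ((pfun i).symm.trans ℓfin)⁻¹ (ℓfin w) = pfun i w := by
    intro w
    simp [Equiv.Perm.inv_def]
  rw [hπ u, hπ v]
  -- congruence lemmas for the inner labels
  have inn_eq : ∀ (w : V) (A : {N : Set V // PmaxPart c Set.univ N}) (hw : w ∈ A.1),
      ((eA (part w) ⟨w, hpartmem w⟩ : Fin _) : ℕ) = ((eA A ⟨w, hw⟩ : Fin _) : ℕ) := by
    intro w A hw
    have h : part w = A := hparteq w A hw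
    subst h
    rfl
  have pinn_eq : ∀ (w : V) (A : {N : Set V // PmaxPart c Set.univ N}) (hw : w ∈ A.1),
      (((πA (part w) i)⁻¹ ((eA (part w)) ⟨w, hpartmem w⟩) : Fin _) : ℕ) =
        (((πA A i)⁻¹ ((eA A) ⟨w, hw⟩) : Fin _) : ℕ) := by
    intro w A hw
    have h : part w = A := hparteq w A hw
    subst h
    rfl
  have hpf := hpfun i
  simp only [Equiv.trans_apply] at hpf
  by_cases hAB : part u = part v
  · -- same part
    have hv' : v ∈ (part u).1 := by rw [hAB]; exact hpartmem v
    have e1 : (ℓfin v < ℓfin u) ↔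
        ((eA (part u) ⟨v, hv'⟩ : Fin _) < (eA (part u) ⟨u, hpartmem u⟩ : Fin _)) := by
      rw [hℓfin v u, inn_eq v (part u) hv', Fin.lt_def]
      have hQne : ¬ (ℓQ (part v) < ℓQ (part u)) := by rw [hAB]; exact lt_irrefl _
      exact ⟨fun h => h.elim (fun h => absurd h hQne) And.right,
        fun h => Or.inr ⟨hAB.symm, h⟩⟩
    have e2 : (ℓfin u < ℓfin v) ↔
        ((eA (part u) ⟨u, hpartmem u⟩ : Fin _) < (eA (part u) ⟨v, hv'⟩ : Fin _)) := by
      rw [hℓfin u v, inn_eq v (part u) hv', Fin.lt_def]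
      have hQne : ¬ (ℓQ (part u) < ℓQ (part v)) := by rw [hAB]; exact lt_irrefl _
      exact ⟨fun h => h.elim (fun h => absurd h hQne) And.right,
        fun h => Or.inr ⟨hAB, h⟩⟩
    have e3 : (pfun i u < pfun i v) ↔
        (((πA (part u) i)⁻¹ ((eA (part u)) ⟨u, hpartmem u⟩) : Fin _) <
          ((πA (part u) i)⁻¹ ((eA (part u)) ⟨v, hv'⟩) : Fin _)) := by
      rw [hpf u v, pinn_eq v (part u) hv', Fin.lt_def]
      have hQne : ¬ ((πQ i)⁻¹ (ℓQ (part u)) < (πQ i)⁻¹ (ℓQ (part v))) := by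
        rw [hAB]; exact lt_irrefl _
      exact ⟨fun h => h.elim (fun h => absurd h hQne) And.right,
        fun h => Or.inr ⟨hAB, h⟩⟩
    have e4 : (pfun i v < pfun i u) ↔
        (((πA (part u) i)⁻¹ ((eA (part u)) ⟨v, hv'⟩) : Fin _) <
          ((πA (part u) i)⁻¹ ((eA (part u)) ⟨u, hpartmem u⟩) : Fin _)) := by
      rw [hpf v u, pinn_eq v (part u) hv', Fin.lt_def]
      have hQne : ¬ ((πQ i)⁻¹ (ℓQ (part v)) < (πQ i)⁻¹ (ℓQ (part u))) := by
        rw [hAB]; exact lt_irrefl _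
      exact ⟨fun h => h.elim (fun h => absurd h hQne) And.right,
        fun h => Or.inr ⟨hAB.symm, h⟩⟩
    have e5 : monoEdge c i u v ↔
        monoEdge (restrictC c (part u).1) i ⟨u, hpartmem u⟩ ⟨v, hv'⟩ := by
      unfold monoEdge restrictC
      constructor
      · rintro ⟨hne, hc⟩
        exact ⟨fun h => hne (congrArg Subtype.val h), hc⟩
      · rintro ⟨hne, hc⟩
        exact ⟨fun h => hne (Subtype.ext h), hc⟩
    rw [e5, heA (part u) i ⟨u, hpartmem u⟩ ⟨v, hv'⟩, e1, e2, e3, e4]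
  · -- different parts
    have hne : u ≠ v := fun h => hAB (by rw [h])
    have hvnotA : v ∉ (part u).1 := fun h => hAB (hparteq v (part u) h).symm
    have hunotB : u ∉ (part v).1 := fun h => hAB (hparteq u (part v) h)
    have hedge : monoEdge c i u v ↔ quotientMonoEdge c Set.univ i (part u) (part v) := by
      unfold monoEdge quotientMonoEdge
      constructor
      · rintro ⟨-, hc⟩
        exact ⟨hAB ∘ Subtype.ext ∘ congrArg Subtype.val, u, hpartmem u, v, hpartmem v, hc⟩
      · rintro ⟨-, u', hu', v', hv', hcuv⟩
        refine ⟨hne, ?_⟩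
        have hu'notB : u' ∉ (part v).1 := by
          intro h
          have h1 : part u' = part v := hparteq u' (part v) h
          have h2 : part u' = part u := hparteq u' (part u) hu'
          exact hAB (h2 ▸ h1)
        have h1 : c u v = c u' v := (part u).2.2.1.1 u (hpartmem u) u' hu' v hvnotA
        have h2 : c v u' = c v' u' := (part v).2.2.1.1 v (hpartmem v) v' hv' u' hu'notB
        rw [h1, hsym u' v, h2, hsym v' u', hcuv]
    have e1 : (ℓfin v < ℓfin u) ↔ ℓQ (part v) < ℓQ (part u) := by
      rw [hℓfin v u]
      exact ⟨fun h => h.elim id (fun h' => absurd h'.1.symm hAB), Or.inl⟩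
    have e2 : (ℓfin u < ℓfin v) ↔ ℓQ (part u) < ℓQ (part v) := by
      rw [hℓfin u v]
      exact ⟨fun h => h.elim id (fun h' => absurd h'.1 hAB), Or.inl⟩
    have e3 : (pfun i u < pfun i v) ↔ (πQ i)⁻¹ (ℓQ (part u)) < (πQ i)⁻¹ (ℓQ (part v)) := by
      rw [hpf u v]
      exact ⟨fun h => h.elim id (fun h' => absurd h'.1 hAB), Or.inl⟩
    have e4 : (pfun i v < pfun i u) ↔ (πQ i)⁻¹ (ℓQ (part v)) < (πQ i)⁻¹ (ℓQ (part u)) := by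
      rw [hpf v u]
      exact ⟨fun h => h.elim id (fun h' => absurd h'.1.symm hAB), Or.inl⟩
    rw [hedge, hQ i (part u) (part v), e1, e2, e3, e4]

end MainProof


/-- If for every strong module `M` of `G` with `|M| ≥ 2` the quotient
graph `G[M]/P_max(M)` is a complete edge-colored permutation graph, then `G` is a
complete edge-colored permutation graph. -/
theorem stmt13 {V : Type*} [Fintype V] [Nonempty V] (k : ℕ) (c : V → V → ℕ)
    (hc : IsCompleteColoring k c)
    (hq : ∀ M : Set V, IsStrongModule c M → 2 ≤ M.ncard → QuotientIsCECPG c M) :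
    IsCECPG c := by
  exact auxMain (Fintype.card V) V c hc.1 hq rfl
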